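/- Let V be a real Banach space, p ≥ 2, θ > 1, ε ≥ 0, and let ω be a control function. Let A^1, B^1 : Δ → V and A^2, B^2 : Δ → V ⊗ V (projective tensor norm) satisfy, for all 0 ≤ s ≤ u ≤ t ≤ 1: ‖A^1_{s,t}‖, ‖B^1_{s,t}‖ ≤ ω(s,t)^{1/p}; ‖A^1_{s,t} − B^1_{s,t}‖ ≤ ε ω(s,t)^{1/p}; ‖A^2_{s,t}‖, ‖B^2_{s,t}‖ ≤ ω(s,t)^{2/p}; ‖A^2_{s,t} − B^2_{s,t}‖ ≤ ε ω(s,t)^{2/p}; the first-level defect bounds ‖A^1_{s,t} − A^1_{s,u} − A^1_{u,t}‖ ≤ ω(s,t)^θ, ‖B^1_{s,t} − B^1_{s,u} − B^1_{u,t}‖ ≤ ω(s,t)^θ, ‖(A^1_{s,t} − A^1_{s,u} − A^1_{u,t}) − (B^1_{s,t} − B^1_{s,u} − B^1_{u,t})‖ ≤ ε ω(s,t)^θ; and the second-level defect bounds ‖A^2_{s,t} − A^2_{s,u} − A^2_{u,t} − A^1_{s,u} ⊗ A^1_{u,t}‖ ≤ ω(s,t)^θ, ‖B^2_{s,t} −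 B^2_{s,u} − B^2_{u,t} − B^1_{s,u} ⊗ B^1_{u,t}‖ ≤ ω(s,t)^θ, and ‖(A^2_{s,t} − A^2_{s,u} − A^2_{u,t} − A^1_{s,u} ⊗ A^1_{u,t}) − (B^2_{s,t} − B^2_{s,u} − B^2_{u,t} − B^1_{s,u} ⊗ B^1_{u,t})‖ ≤ ε ω(s,t)^θ. Suppose that for every (s,t) ∈ Δ the limits Â^1_{s,t} := lim_{|P|→0} Σ_i A^1_{t_{i−1},t_i}, B̂^1_{s,t} := lim_{|P|→0} Σ_i B^1_{t_{i−1},t_i}, Â^2_{s,t} := lim_{|P|→0} Σ_i (A^2_{t_{i−1},t_i} + Â^1_{s,t_{i−1}} ⊗ Â^1_{t_{i−1},t_i}), and B̂^2_{s,t} := lim_{|P|→0} Σ_i (B^2_{t_{i−1},t_i} + B̂^1_{s,t_{i−1}} ⊗ B̂^1_{t_{i−1},t_i}) (over finite partitions P = {s = t_0 < ⋯ < t_N = t} of [s,t] as the mesh tends to 0) exist. Then there exists a constant C > 0 depending only on p, θ and ω(0,1) such that for all (s,t) ∈ Δ, ‖(Â^2_{s,t} − A^2_{s,t}) − (B̂^2_{s,t}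 − B^2_{s,t})‖ ≤ ε C ω(s,t)^θ, and consequently ‖Â^2_{s,t} − B̂^2_{s,t}‖ ≤ ε C ω(s,t)^{2/p}. -/

import Mathlib

/-!
STATEMENT 15: comparison of two almost rough paths (levels 1 and 2) with their associated
rough paths; the second level takes values in the projective tensor product `V ⊗ V`.
-/

open scoped TensorProduct

universe u

/-- A finite partition of the interval `[s,t]`: monotone points `pt 0 = s ≤ ⋯ ≤ pt N = t`. -/
structure Subdivision (s t : ℝ) where
  N : ℕ
  pt : ℕ → ℝ
  pos : 0 < N
  first : pt 0 = s
  last : pt N = t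
  mono : ∀ i, i < N → pt i ≤ pt (i + 1)

/-- The mesh of a partition: the largest length of a subinterval. -/
noncomputable def Subdivision.mesh {s t : ℝ} (P : Subdivision s t) : ℝ :=
  (Finset.range P.N).sup' (Finset.nonempty_range_iff.mpr P.pos.ne')
    (fun i => P.pt (i + 1) - P.pt i)

/-- A control function on the simplex `Δ = {0 ≤ s ≤ t ≤ 1}`. -/
def IsControl (ω : ℝ → ℝ → ℝ) : Prop :=
  ContinuousOn (fun p : ℝ × ℝ => ω p.1 p.2) {p : ℝ × ℝ | 0 ≤ p.1 ∧ p.1 ≤ p.2 ∧ p.2 ≤ 1} ∧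
  (∀ t, 0 ≤ t → t ≤ 1 → ω t t = 0) ∧
  (∀ s t, 0 ≤ s → s ≤ t → t ≤ 1 → 0 ≤ ω s t) ∧
  (∀ s u t, 0 ≤ s → s ≤ u → u ≤ t → t ≤ 1 → ω s u + ω u t ≤ ω s t)

/-- `V ⊗ V` with the projective tensor seminorm, realized as the 2-fold tensor power. -/
abbrev TensorSq (V : Type u) [NormedAddCommGroup V] [NormedSpace ℝ V] :=
  ⨂[ℝ] _ : Fin 2, V

/-- The elementary tensor `a ⊗ b` in `V ⊗ V`. -/
noncomputable def otimes {V : Type u} [NormedAddCommGroup V] [NormedSpace ℝ V] (a b : V) :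
    TensorSq V :=
  PiTensorProduct.tprod ℝ ![a, b]

/-- The projective tensor seminorm on `V ⊗ V`. -/
noncomputable def projSN {V : Type u} [NormedAddCommGroup V] [NormedSpace ℝ V]
    (x : TensorSq V) : ℝ :=
  PiTensorProduct.projectiveSeminorm x

/-- `L = lim_{|P| → 0} ∑_i A_{t_{i−1}, t_i}` over finite partitions `P` of `[s,t]` (`V`-valued). -/
def PartSumLimit {V : Type u} [NormedAddCommGroup V]
    (A : ℝ → ℝ → V) (s t : ℝ) (L : V) : Prop :=
  ∀ ε > (0 : ℝ), ∃ δ > (0 : ℝ), ∀ P : Subdivision s t, P.mesh < δ →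
    ‖(∑ i ∈ Finset.range P.N, A (P.pt i) (P.pt (i + 1))) - L‖ ≤ ε

/-- `L = lim_{|P| → 0} ∑_i (A²_{t_{i−1},t_i} + Â¹_{s,t_{i−1}} ⊗ Â¹_{t_{i−1},t_i})` in the
projective seminorm, over finite partitions `P` of `[s,t]`. -/
def PartSumLimit2 {V : Type u} [NormedAddCommGroup V] [NormedSpace ℝ V]
    (A2 : ℝ → ℝ → TensorSq V) (A1hat : ℝ → ℝ → V) (s t : ℝ) (L : TensorSq V) : Prop :=
  ∀ ε > (0 : ℝ), ∃ δ > (0 : ℝ), ∀ P : Subdivision s t, P.mesh < δ →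
    projSN ((∑ i ∈ Finset.range P.N,
        (A2 (P.pt i) (P.pt (i + 1)) + otimes (A1hat s (P.pt i)) (A1hat (P.pt i) (P.pt (i + 1)))))
      - L) ≤ ε

namespace S15
open Finset

lemma mono_chain (c : ℕ → ℝ) (m : ℕ) (hmono : ∀ i < m, c i ≤ c (i+1))
    {i j : ℕ} (hij : i ≤ j) (hj : j ≤ m) : c i ≤ c j := by
  induction j with
  | zero => have : i = 0 := by omega
            simp [this]
  | succ n ihn =>
    rcases Nat.lt_or_ge i (n+1) with h | h
    · exact le_trans (ihn (by omega) (by omega)) (hmono n (by omega))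
    · have : i = n + 1 := by omega
      simp [this]

lemma pt_le {s t : ℝ} (P : Subdivision s t) {i j : ℕ} (hij : i ≤ j)
    (hj : j ≤ P.N) : P.pt i ≤ P.pt j :=
  mono_chain P.pt P.N (fun k hk => P.mono k hk) hij hj

lemma pt_ge_s {s t : ℝ} (P : Subdivision s t) {i : ℕ} (hi : i ≤ P.N) :
    s ≤ P.pt i := by have := pt_le P (Nat.zero_le i) hi; rwa [P.first] at this

lemma pt_le_t {s t : ℝ} (P : Subdivision s t) {i : ℕ} (hi : i ≤ P.N) :
    P.pt i ≤ t := by have := pt_le P hi le_rfl; rwa [P.last] at this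

section Control
variable {ω : ℝ → ℝ → ℝ}

lemma ctl_nonneg (hω : IsControl ω) {a b : ℝ} (h0 : 0 ≤ a) (h1 : a ≤ b) (h2 : b ≤ 1) :
    0 ≤ ω a b := hω.2.2.1 a b h0 h1 h2

lemma ctl_mono (hω : IsControl ω) {a b a' b' : ℝ} (h0 : 0 ≤ a') (h1 : a' ≤ a) (h2 : a ≤ b)
    (h3 : b ≤ b') (h4 : b' ≤ 1) : ω a b ≤ ω a' b' := by
  have h5 := hω.2.2.2 a' a b h0 h1 h2 (le_trans h3 h4)
  have h6 := hω.2.2.2 a' b b' h0 (h1.trans h2) h3 h4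
  have n1 := hω.2.2.1 a' a h0 h1 (by linarith)
  have n2 := hω.2.2.1 b b' (by linarith) h3 h4
  linarith

lemma chain_sum (hω : IsControl ω) (c : ℕ → ℝ) (m : ℕ) (h0 : 0 ≤ c 0)
    (hmono : ∀ i < m, c i ≤ c (i+1)) (h1 : c m ≤ 1) :
    ∑ k ∈ Finset.range m, ω (c k) (c (k+1)) ≤ ω (c 0) (c m) := by
  induction m with
  | zero => simpa using hω.2.2.1 (c 0) (c 0) h0 le_rfl h1
  | succ n ihn =>
    have hmono' : ∀ i < n, c i ≤ c (i+1) := fun i hi => hmono i (by omega)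
    have hcn : c n ≤ c (n+1) := hmono n (by omega)
    have h0n : c 0 ≤ c n := mono_chain c (n+1) hmono (Nat.zero_le n) (by omega)
    have h1n : c n ≤ 1 := le_trans hcn h1
    rw [Finset.sum_range_succ]
    have := hω.2.2.2 (c 0) (c n) (c (n+1)) h0 h0n hcn h1
    linarith [ihn hmono' h1n]

end Control

noncomputable def unif (s t : ℝ) (hst : s ≤ t) (n : ℕ) (hn : 0 < n) : Subdivision s t where
  N := n
  pt := fun i => s + ((min i n : ℕ) : ℝ) * (t - s) / n
  pos := hn
  first := by simp
  last := by
    have hn' : (n : ℝ) ≠ 0 := Nat.cast_ne_zero.mpr hn.ne'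
    field_simp
    rw [min_self]; ring
  mono := fun i hi => by
    have h1 : min i n = i := min_eq_left (by omega)
    have h2 : min (i+1) n = i + 1 := min_eq_left (by omega)
    rw [h1, h2]
    have hts : 0 ≤ t - s := by linarith
    have hn' : (0:ℝ) < n := by positivity
    push_cast
    gcongr
    linarith

lemma unif_mesh_le (s t : ℝ) (hst : s ≤ t) (n : ℕ) (hn : 0 < n) :
    (unif s t hst n hn).mesh ≤ (t - s) / n := by
  apply Finset.sup'_le
  intro i hi
  have hi' : i < n := Finset.mem_range.mp hi
  show (unif s t hst n hn).pt (i+1) - (unif s t hst n hn).pt i ≤ (t - s) / n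
  unfold unif
  dsimp only
  have h1 : min i n = i := min_eq_left (by omega)
  have h2 : min (i+1) n = i + 1 := min_eq_left (by omega)
  rw [h1, h2]
  have : s + ((i+1:ℕ):ℝ) * (t-s) / (n:ℝ) - (s + ((i:ℕ):ℝ) * (t-s) / (n:ℝ)) = (t-s)/n := by
    push_cast; ring
  rw [this]

lemma exists_fine (s t : ℝ) (hst : s ≤ t) (δ : ℝ) (hδ : 0 < δ) :
    ∃ P : Subdivision s t, P.mesh < δ := by
  obtain ⟨n, hn⟩ := exists_nat_gt ((t - s) / δ)
  refine ⟨unif s t hst (n+1) (Nat.succ_pos n), lt_of_le_of_lt (unif_mesh_le _ _ _ _ _) ?_⟩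
  have h1 : (t - s) / δ < (n + 1 : ℕ) := by push_cast; linarith [Nat.cast_nonneg (α := ℝ) n]
  rw [div_lt_iff₀ (by positivity)]
  calc t - s = ((t - s) / δ) * δ := by field_simp
  _ < ((n+1 : ℕ) : ℝ) * δ := by exact mul_lt_mul_of_pos_right h1 hδ
  _ = δ * ((n+1:ℕ) : ℝ) := by ring

lemma sum_range_add' {M : Type*} [AddCommMonoid M] (f : ℕ → M) (m n : ℕ) :
    ∑ i ∈ range (m+n), f i = ∑ i ∈ range m, f i + ∑ i ∈ range n, f (m+i) := by
  have h1 : ∑ i ∈ Ico m (m+n), f i = ∑ i ∈ range n, f (m+i) := by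
    rw [Finset.sum_Ico_eq_sum_range, Nat.add_sub_cancel_left]
  rw [range_eq_Ico, ← Finset.sum_Ico_consecutive f (Nat.zero_le m) (Nat.le_add_right m n),
    h1, ← range_eq_Ico]

/-- removal identity, abstract version -/
lemma sum_remove_abstract {M : Type*} [AddCommGroup M] (f g : ℕ → M) (N i : ℕ)
    (h1 : 1 ≤ i) (h2 : i < N)
    (hlt : ∀ j, j < i - 1 → g j = f j)
    (hge : ∀ j, i ≤ j → g j = f (j+1)) :
    ∑ j ∈ range (N-1), g j
      = (∑ j ∈ range N, f j) - (f (i-1) + f i) + g (i-1) := by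
  have e1 : ∑ j ∈ range (N-1), g j
      = ∑ j ∈ Ico 0 (i-1), g j + (g (i-1) + ∑ j ∈ Ico i (N-1), g j) := by
    rw [range_eq_Ico, ← Finset.sum_Ico_consecutive g (Nat.zero_le (i-1)) (by omega),
      Finset.sum_eq_sum_Ico_succ_bot (by omega : i - 1 < N - 1) g]
    have : i - 1 + 1 = i := by omega
    rw [this]
  have e2 : ∑ j ∈ range N, f j
      = ∑ j ∈ Ico 0 (i-1), f j + (f (i-1) + (f i + ∑ j ∈ Ico (i+1) N, f j)) := by
    rw [range_eq_Ico, ← Finset.sum_Ico_consecutive f (Nat.zero_le (i-1)) (by omega),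
      Finset.sum_eq_sum_Ico_succ_bot (by omega : i - 1 < N) f]
    have h3 : i - 1 + 1 = i := by omega
    rw [h3, Finset.sum_eq_sum_Ico_succ_bot (by omega : i < N) f]
  have e3 : ∑ j ∈ Ico 0 (i-1), g j = ∑ j ∈ Ico 0 (i-1), f j :=
    Finset.sum_congr rfl fun j hj => hlt j (by simpa using (Finset.mem_Ico.mp hj).2)
  have e4 : ∑ j ∈ Ico i (N-1), g j = ∑ j ∈ Ico (i+1) N, f j := by
    rw [Finset.sum_Ico_eq_sum_range, Finset.sum_Ico_eq_sum_range]
    have hc : N - 1 - i = N - (i+1) := by omega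
    rw [hc]
    exact Finset.sum_congr rfl fun j _ => by rw [hge (i+j) (by omega)]; congr 1; omega
  rw [e1, e2, e3, e4]
  abel


def concat {s u t : ℝ} (P : Subdivision s u) (Q : Subdivision u t) : Subdivision s t where
  N := P.N + Q.N
  pt := fun j => if j < P.N then P.pt j else Q.pt (j - P.N)
  pos := by have := P.pos; omega
  first := by rw [if_pos P.pos]; exact P.first
  last := by
    rw [if_neg (by omega)]
    have h : P.N + Q.N - P.N = Q.N := by omega
    rw [h]; exact Q.last
  mono := fun j hj => by
    rcases Nat.lt_or_ge (j+1) P.N with h | h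
    · rw [if_pos (by omega : j < P.N), if_pos h]; exact P.mono j (by omega)
    · rcases Nat.lt_or_ge j P.N with h' | h'
      · have hj1 : j + 1 = P.N := by omega
        rw [if_pos h', if_neg (by omega : ¬ (j + 1 < P.N))]
        have e1 : j + 1 - P.N = 0 := by omega
        rw [e1, Q.first]
        have hm := P.mono j (by omega)
        rw [hj1, P.last] at hm
        exact hm
      · rw [if_neg (by omega : ¬ (j < P.N)), if_neg (by omega : ¬ (j + 1 < P.N))]
        have e1 : j + 1 - P.N = (j - P.N) + 1 := by omega
        rw [e1]
        exact Q.mono (j - P.N) (by omega)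

lemma concat_pt_eq {s u t : ℝ} (P : Subdivision s u) (Q : Subdivision u t) (j : ℕ)
    (hj : j ≤ P.N) : (concat P Q).pt j = P.pt j := by
  show (if j < P.N then P.pt j else Q.pt (j - P.N)) = P.pt j
  rcases Nat.lt_or_ge j P.N with h | h
  · rw [if_pos h]
  · have hj1 : j = P.N := by omega
    rw [if_neg (by omega), hj1]
    have e1 : P.N - P.N = 0 := by omega
    rw [e1, Q.first, P.last]

lemma concat_pt_eq' {s u t : ℝ} (P : Subdivision s u) (Q : Subdivision u t) (j : ℕ)
    (hj : P.N ≤ j) : (concat P Q).pt j = Q.pt (j - P.N) := by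
  show (if j < P.N then P.pt j else Q.pt (j - P.N)) = Q.pt (j - P.N)
  rcases Nat.lt_or_ge j P.N with h | h
  · have hj1 : j = P.N := by omega
    rw [if_pos h]
    omega
  · rw [if_neg (by omega)]

lemma concat_mesh_le {s u t : ℝ} (P : Subdivision s u) (Q : Subdivision u t) :
    (concat P Q).mesh ≤ max P.mesh Q.mesh := by
  apply Finset.sup'_le
  intro j hj
  have hj' : j < P.N + Q.N := Finset.mem_range.mp hj
  have hP : ∀ i, i < P.N → P.pt (i+1) - P.pt i ≤ P.mesh := fun i hi =>
    Finset.le_sup' (fun k => P.pt (k+1) - P.pt k) (Finset.mem_range.mpr hi)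
  have hQ : ∀ i, i < Q.N → Q.pt (i+1) - Q.pt i ≤ Q.mesh := fun i hi =>
    Finset.le_sup' (fun k => Q.pt (k+1) - Q.pt k) (Finset.mem_range.mpr hi)
  rcases Nat.lt_or_ge j P.N with h | h
  · rw [concat_pt_eq P Q j (by omega), concat_pt_eq P Q (j+1) (by omega)]
    exact le_trans (hP j h) (le_max_left _ _)
  · rw [concat_pt_eq' P Q j h, concat_pt_eq' P Q (j+1) (by omega)]
    have e1 : j + 1 - P.N = (j - P.N) + 1 := by omega
    rw [e1]
    exact le_trans (hQ (j - P.N) (by omega)) (le_max_right _ _)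

lemma concat_sum {W : Type*} [AddCommGroup W] (T : ℝ → ℝ → W) {s u t : ℝ}
    (P : Subdivision s u) (Q : Subdivision u t) :
    ∑ j ∈ range (concat P Q).N, T ((concat P Q).pt j) ((concat P Q).pt (j+1))
      = ∑ j ∈ range P.N, T (P.pt j) (P.pt (j+1))
        + ∑ j ∈ range Q.N, T (Q.pt j) (Q.pt (j+1)) := by
  have hN : (concat P Q).N = P.N + Q.N := rfl
  rw [hN, sum_range_add']
  congr 1
  · refine Finset.sum_congr rfl fun j hj => ?_
    have hj' : j < P.N := Finset.mem_range.mp hj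
    rw [concat_pt_eq P Q j (by omega), concat_pt_eq P Q (j+1) (by omega)]
  · refine Finset.sum_congr rfl fun j hj => ?_
    rw [concat_pt_eq' P Q (P.N + j) (by omega), concat_pt_eq' P Q (P.N + j + 1) (by omega)]
    have e1 : P.N + j - P.N = j := by omega
    have e2 : P.N + j + 1 - P.N = j + 1 := by omega
    rw [e1, e2]

def sremove {s t : ℝ} (P : Subdivision s t) (i : ℕ) (h1 : 1 ≤ i)
    (h2 : i < P.N) : Subdivision s t where
  N := P.N - 1
  pt := fun j => if j < i then P.pt j else P.pt (j+1)
  pos := by omega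
  first := by rw [if_pos (show 0 < i from h1)]; exact P.first
  last := by
    rw [if_neg (by omega)]
    have h : P.N - 1 + 1 = P.N := by omega
    rw [h]; exact P.last
  mono := fun j hj => by
    by_cases hj1 : j + 1 < i
    · rw [if_pos (by omega : j < i), if_pos hj1]; exact P.mono j (by omega)
    · by_cases hj2 : j < i
      · rw [if_pos hj2, if_neg hj1]
        exact le_trans (P.mono j (by omega)) (P.mono (j+1) (by omega))
      · rw [if_neg hj2, if_neg (by omega : ¬ (j + 1 < i))]
        exact P.mono (j+1) (by omega)

lemma sremove_pt_lt {s t : ℝ} (P : Subdivision s t) (i : ℕ) (h1 : 1 ≤ i) (h2 : i < P.N)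
    (j : ℕ) (hj : j < i) : (sremove P i h1 h2).pt j = P.pt j := by
  show (if j < i then P.pt j else P.pt (j+1)) = P.pt j
  rw [if_pos hj]

lemma sremove_pt_ge {s t : ℝ} (P : Subdivision s t) (i : ℕ) (h1 : 1 ≤ i) (h2 : i < P.N)
    (j : ℕ) (hj : i ≤ j) : (sremove P i h1 h2).pt j = P.pt (j+1) := by
  show (if j < i then P.pt j else P.pt (j+1)) = P.pt (j+1)
  rw [if_neg (by omega)]

lemma remove_sum {W : Type*} [AddCommGroup W] (T : ℝ → ℝ → W) {s t : ℝ}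
    (P : Subdivision s t) (i : ℕ) (h1 : 1 ≤ i) (h2 : i < P.N) :
    ∑ j ∈ range (sremove P i h1 h2).N,
        T ((sremove P i h1 h2).pt j) ((sremove P i h1 h2).pt (j+1))
      = (∑ j ∈ range P.N, T (P.pt j) (P.pt (j+1)))
        - (T (P.pt (i-1)) (P.pt i) + T (P.pt i) (P.pt (i+1)))
        + T (P.pt (i-1)) (P.pt (i+1)) := by
  have key := sum_remove_abstract (fun j => T (P.pt j) (P.pt (j+1)))
    (fun j => T ((sremove P i h1 h2).pt j) ((sremove P i h1 h2).pt (j+1))) P.N i h1 h2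
    (fun j hj => by
      rw [sremove_pt_lt P i h1 h2 j (by omega), sremove_pt_lt P i h1 h2 (j+1) (by omega)])
    (fun j hj => by
      rw [sremove_pt_ge P i h1 h2 j hj, sremove_pt_ge P i h1 h2 (j+1) (by omega)])
  have hN : (sremove P i h1 h2).N = P.N - 1 := rfl
  rw [hN, key]
  rw [sremove_pt_lt P i h1 h2 (i-1) (by omega), sremove_pt_ge P i h1 h2 (i-1+1) (by omega)]
  have e1 : i - 1 + 1 = i := by omega
  rw [e1]

noncomputable def Cth (θ : ℝ) : ℝ := ∑' n : ℕ, (2 / ((n+1:ℕ) : ℝ)) ^ θ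

lemma summable_cth {θ : ℝ} (hθ : 1 < θ) : Summable (fun n : ℕ => (2 / ((n+1:ℕ):ℝ)) ^ θ) := by
  have h := (Real.summable_one_div_nat_rpow (p := θ)).mpr hθ
  have h2 := (summable_nat_add_iff 1).mpr h
  have h3 := h2.mul_left ((2:ℝ) ^ θ)
  refine h3.congr fun n => ?_
  push_cast
  rw [Real.div_rpow (by norm_num) (by positivity), mul_one_div]

lemma cth_nonneg {θ : ℝ} : 0 ≤ Cth θ :=
  tsum_nonneg fun n => Real.rpow_nonneg (by positivity) θ

lemma sum_le_cth {θ : ℝ} (hθ : 1 < θ) (n : ℕ) :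
    ∑ k ∈ range n, (2 / ((k+1:ℕ):ℝ)) ^ θ ≤ Cth θ :=
  Summable.sum_le_tsum (range n) (fun k _ => Real.rpow_nonneg (by positivity) θ)
    (summable_cth hθ)

lemma exists_good {ω : ℝ → ℝ → ℝ} (hω : IsControl ω) {s t : ℝ} (hs : 0 ≤ s) (hst : s ≤ t)
    (ht : t ≤ 1) (P : Subdivision s t) (hN : 2 ≤ P.N) :
    ∃ i, 1 ≤ i ∧ i < P.N ∧
      ω (P.pt (i-1)) (P.pt (i+1)) ≤ 2 * ω s t / ((P.N - 1 : ℕ) : ℝ) := by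
  set m := P.N / 2 with hm
  have hm1 : 1 ≤ m := by omega
  have h2m : 2 * m ≤ P.N := by omega
  -- chain sum bound
  have hchain : ∑ k ∈ range m, ω (P.pt (2*k)) (P.pt (2*k+2)) ≤ ω s t := by
    have hc := chain_sum hω (fun k => P.pt (2*k)) m
      (by simpa [P.first] using hs)
      (fun i hi => by
        have e : 2*(i+1) = 2*i+1+1 := by ring
        rw [e]
        exact le_trans (P.mono (2*i) (by omega)) (P.mono (2*i+1) (by omega)))
      (le_trans (pt_le_t P (by omega)) ht)
    have e2 : ω (P.pt (2*0)) (P.pt (2*m)) ≤ ω s t := by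
      have := ctl_mono hω (a := P.pt 0) (b := P.pt (2*m)) (a' := s) (b' := t)
        hs (le_of_eq P.first.symm) (pt_le P (by omega) (by omega)) (pt_le_t P (by omega)) ht
      simpa [P.first] using this
    refine le_trans (le_trans (le_of_eq ?_) hc) e2
    refine Finset.sum_congr rfl fun k _ => ?_
    have e : 2*(k+1) = 2*k+2 := by ring
    rw [e]
  have hne : (range m).Nonempty := Finset.nonempty_range_iff.mpr (by omega)
  have havg : ∃ k ∈ range m, ω (P.pt (2*k)) (P.pt (2*k+2)) ≤ ω s t / m := by
    apply Finset.exists_le_of_sum_le hne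
    rw [Finset.sum_const, Finset.card_range, nsmul_eq_mul]
    rw [mul_div_cancel₀ _ (by positivity : (m:ℝ) ≠ 0)]
    exact hchain
  obtain ⟨k, hk, hkle⟩ := havg
  have hk' : k < m := Finset.mem_range.mp hk
  refine ⟨2*k+1, by omega, by omega, ?_⟩
  have e1 : 2*k+1-1 = 2*k := by omega
  have e2 : 2*k+1+1 = 2*k+2 := by omega
  rw [e1, e2]
  refine le_trans hkle ?_
  have hω0 : 0 ≤ ω s t := ctl_nonneg hω hs hst ht
  have hmpos : (0:ℝ) < m := by positivity
  have hNpos : (0:ℝ) < ((P.N - 1 : ℕ):ℝ) := by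
    have : 1 ≤ P.N - 1 := by omega
    exact_mod_cast Nat.lt_of_lt_of_le Nat.zero_lt_one this
  rw [div_le_div_iff₀ hmpos hNpos]
  have hcast : ((P.N - 1 : ℕ):ℝ) ≤ 2 * m := by
    have : P.N - 1 ≤ 2 * m := by omega
    exact_mod_cast this
  nlinarith

section Key
variable {W : Type*} [AddCommGroup W] [Module ℝ W]

lemma key_aux (ν : Seminorm ℝ W) {θ : ℝ} (hθ : 1 < θ) {ω : ℝ → ℝ → ℝ} (hω : IsControl ω)
    {s t : ℝ} (hs : 0 ≤ s) (hst : s ≤ t) (ht : t ≤ 1)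
    (T : ℝ → ℝ → W) (K : ℝ) (hK : 0 ≤ K)
    (hT : ∀ a u b, s ≤ a → a ≤ u → u ≤ b → b ≤ t →
      ν (T a b - T a u - T u b) ≤ K * ω a b ^ θ) :
    ∀ n (P : Subdivision s t), P.N = n →
      ν ((∑ i ∈ Finset.range P.N, T (P.pt i) (P.pt (i+1))) - T s t)
        ≤ K * (∑ k ∈ Finset.range (n-1), (2 / ((k+1:ℕ):ℝ)) ^ θ) * ω s t ^ θ := by
  intro n
  induction n using Nat.strong_induction_on with
  | _ n ih =>
    intro P hP
    rcases Nat.lt_or_ge n 2 with hn2 | hn2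
    · -- n = 1
      have hn1 : n = 1 := by have := P.pos; omega
      subst hn1
      rw [hP, Finset.sum_range_one]
      have e0 : P.pt 0 = s := P.first
      have e1 : P.pt 1 = t := by rw [← hP]; exact P.last
      rw [e0, e1, sub_self, map_zero]
      simp only [Nat.sub_self, Finset.range_zero, Finset.sum_empty, mul_zero, zero_mul]
      exact le_rfl
    · -- n ≥ 2
      obtain ⟨i, hi1, hi2, hgood⟩ := exists_good hω hs hst ht P (by omega)
      set P' := sremove P i hi1 hi2 with hP'
      have hsum := remove_sum T P i hi1 hi2
      have hbdP' := ih (n-1) (by omega) P' (by show P.N - 1 = n - 1; omega)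
      -- the cost of the removal
      have ha : s ≤ P.pt (i-1) := pt_ge_s P (by omega)
      have hab : P.pt (i-1) ≤ P.pt i := pt_le P (by omega) (by omega)
      have hbc : P.pt i ≤ P.pt (i+1) := pt_le P (by omega) (by omega)
      have hc : P.pt (i+1) ≤ t := pt_le_t P (by omega)
      have hcost := hT (P.pt (i-1)) (P.pt i) (P.pt (i+1)) ha hab hbc hc
      have hω0 : 0 ≤ ω s t := ctl_nonneg hω hs hst ht
      have hωab0 : 0 ≤ ω (P.pt (i-1)) (P.pt (i+1)) :=
        ctl_nonneg hω (by linarith) (by linarith) (by linarith)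
      have hNpos : (0:ℝ) < ((P.N - 1 : ℕ):ℝ) := by
        have h' : 1 ≤ P.N - 1 := by omega
        exact_mod_cast Nat.lt_of_lt_of_le Nat.zero_lt_one h'
      have hfrac0 : (0:ℝ) ≤ 2 / ((P.N - 1 : ℕ):ℝ) := by positivity
      have hcost2 : K * ω (P.pt (i-1)) (P.pt (i+1)) ^ θ
          ≤ K * ((2 / ((P.N - 1:ℕ):ℝ)) ^ θ * ω s t ^ θ) := by
        apply mul_le_mul_of_nonneg_left _ hK
        rw [← Real.mul_rpow hfrac0 hω0]
        apply Real.rpow_le_rpow hωab0 _ (by linarith)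
        calc ω (P.pt (i-1)) (P.pt (i+1)) ≤ 2 * ω s t / ((P.N - 1:ℕ):ℝ) := hgood
        _ = 2 / ((P.N - 1:ℕ):ℝ) * ω s t := by ring
      -- decompose
      have hsplit : (∑ j ∈ Finset.range P.N, T (P.pt j) (P.pt (j+1))) - T s t
          = ((∑ j ∈ Finset.range P'.N, T (P'.pt j) (P'.pt (j+1))) - T s t)
            + (T (P.pt (i-1)) (P.pt i) + T (P.pt i) (P.pt (i+1))
                - T (P.pt (i-1)) (P.pt (i+1))) := by
        rw [hsum]; abel
      have htri : ν ((∑ j ∈ Finset.range P.N, T (P.pt j) (P.pt (j+1))) - T s t)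
          ≤ ν ((∑ j ∈ Finset.range P'.N, T (P'.pt j) (P'.pt (j+1))) - T s t)
            + ν (T (P.pt (i-1)) (P.pt i) + T (P.pt i) (P.pt (i+1))
                - T (P.pt (i-1)) (P.pt (i+1))) := by
        rw [hsplit]; exact map_add_le_add ν _ _
      have hnegeq : ν (T (P.pt (i-1)) (P.pt i) + T (P.pt i) (P.pt (i+1))
            - T (P.pt (i-1)) (P.pt (i+1)))
          = ν (T (P.pt (i-1)) (P.pt (i+1)) - T (P.pt (i-1)) (P.pt i)
              - T (P.pt i) (P.pt (i+1))) := by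
        rw [← map_neg_eq_map ν]
        congr 1
        abel
      -- series identity
      have hser : ∑ k ∈ Finset.range (n-1), (2 / ((k+1:ℕ):ℝ)) ^ θ
          = ∑ k ∈ Finset.range (n-1-1), (2 / ((k+1:ℕ):ℝ)) ^ θ
            + (2 / ((P.N-1:ℕ):ℝ)) ^ θ := by
        have e : n - 1 = (n - 1 - 1) + 1 := by omega
        rw [e, Finset.sum_range_succ]
        have e2 : n - 1 - 1 + 1 = P.N - 1 := by omega
        rw [e2, show P.N - 1 - 1 = n - 1 - 1 from by omega]
      rw [hser]
      calc ν ((∑ j ∈ Finset.range P.N, T (P.pt j) (P.pt (j+1))) - T s t)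
          ≤ ν ((∑ j ∈ Finset.range P'.N, T (P'.pt j) (P'.pt (j+1))) - T s t)
            + ν (T (P.pt (i-1)) (P.pt (i+1)) - T (P.pt (i-1)) (P.pt i)
                - T (P.pt i) (P.pt (i+1))) := by rw [← hnegeq]; exact htri
      _ ≤ K * (∑ k ∈ Finset.range (n-1-1), (2 / ((k+1:ℕ):ℝ)) ^ θ) * ω s t ^ θ
            + K * ((2 / ((P.N-1:ℕ):ℝ)) ^ θ * ω s t ^ θ) :=
          add_le_add hbdP' (le_trans hcost hcost2)
      _ = K * (∑ k ∈ Finset.range (n-1-1), (2 / ((k+1:ℕ):ℝ)) ^ θ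
            + (2 / ((P.N-1:ℕ):ℝ)) ^ θ) * ω s t ^ θ := by ring

lemma key (ν : Seminorm ℝ W) {θ : ℝ} (hθ : 1 < θ) {ω : ℝ → ℝ → ℝ} (hω : IsControl ω)
    {s t : ℝ} (hs : 0 ≤ s) (hst : s ≤ t) (ht : t ≤ 1)
    (T : ℝ → ℝ → W) (K : ℝ) (hK : 0 ≤ K)
    (hT : ∀ a u b, s ≤ a → a ≤ u → u ≤ b → b ≤ t →
      ν (T a b - T a u - T u b) ≤ K * ω a b ^ θ)
    (P : Subdivision s t) :
    ν ((∑ i ∈ Finset.range P.N, T (P.pt i) (P.pt (i+1))) - T s t)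
      ≤ K * Cth θ * ω s t ^ θ := by
  refine le_trans (key_aux ν hθ hω hs hst ht T K hK hT P.N P rfl) ?_
  have h1 : ∑ k ∈ Finset.range (P.N-1), (2 / ((k+1:ℕ):ℝ)) ^ θ ≤ Cth θ := sum_le_cth hθ _
  have h2 : 0 ≤ ω s t ^ θ := Real.rpow_nonneg (ctl_nonneg hω hs hst ht) θ
  have h3 : 0 ≤ ∑ k ∈ Finset.range (P.N-1), (2 / ((k+1:ℕ):ℝ)) ^ θ :=
    Finset.sum_nonneg fun k _ => Real.rpow_nonneg (by positivity) θ
  nlinarith [mul_le_mul_of_nonneg_left h1 hK]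

lemma seminorm_sub_le (ν : Seminorm ℝ W) (x y : W) : ν (x - y) ≤ ν x + ν y := by
  rw [sub_eq_add_neg]
  refine le_trans (map_add_le_add ν _ _) ?_
  rw [map_neg_eq_map]

lemma limit_of_bound (ν : Seminorm ℝ W) {s t : ℝ} (hst : s ≤ t)
    (S : Subdivision s t → W) (L T0 : W) (M : ℝ)
    (hlim : ∀ η > (0:ℝ), ∃ δ > (0:ℝ), ∀ P : Subdivision s t, P.mesh < δ → ν (S P - L) ≤ η)
    (hbd : ∀ P : Subdivision s t, ν (S P - T0) ≤ M) :
    ν (L - T0) ≤ M := by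
  refine le_of_forall_pos_le_add fun η hη => ?_
  obtain ⟨δ, hδ, h⟩ := hlim η hη
  obtain ⟨P, hPm⟩ := exists_fine s t hst δ hδ
  have e : L - T0 = (L - S P) + (S P - T0) := by abel
  have h1 : ν (L - S P) ≤ η := by
    rw [show L - S P = -(S P - L) by abel, map_neg_eq_map]
    exact h P hPm
  calc ν (L - T0) ≤ ν (L - S P) + ν (S P - T0) := by rw [e]; exact map_add_le_add ν _ _
  _ ≤ η + M := add_le_add h1 (hbd P)
  _ = M + η := add_comm _ _

end Key

section Otimes
variable {V : Type u} [NormedAddCommGroup V] [NormedSpace ℝ V]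

lemma upd0 (x a b : V) : Function.update ![a,b] 0 x = ![x,b] := by
  funext i; fin_cases i <;> simp [Function.update]
lemma upd1 (x a b : V) : Function.update ![a,b] 1 x = ![a,x] := by
  funext i; fin_cases i <;> simp [Function.update]

lemma otimes_add_left (a a' b : V) : otimes (a+a') b = otimes a b + otimes a' b := by
  unfold otimes
  rw [← upd0 (a+a') a b, MultilinearMap.map_update_add, upd0, upd0]
lemma otimes_add_right (a b b' : V) : otimes a (b+b') = otimes a b + otimes a b' := by
  unfold otimes
  rw [← upd1 (b+b') a b, MultilinearMap.map_update_add, upd1, upd1]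
lemma otimes_sub_left (a a' b : V) : otimes (a-a') b = otimes a b - otimes a' b := by
  unfold otimes
  rw [← upd0 (a-a') a b, MultilinearMap.map_update_sub, upd0, upd0]
lemma otimes_sub_right (a b b' : V) : otimes a (b-b') = otimes a b - otimes a b' := by
  unfold otimes
  rw [← upd1 (b-b') a b, MultilinearMap.map_update_sub, upd1, upd1]
lemma otimes_zero_left (b : V) : otimes 0 b = 0 :=
  MultilinearMap.map_coord_zero _ 0 (by simp)

lemma projSN_otimes_le (a b : V) : projSN (otimes a b) ≤ ‖a‖ * ‖b‖ := by
  unfold projSN otimes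
  refine le_trans (PiTensorProduct.projectiveSeminorm_tprod_le ![a,b]) (le_of_eq ?_)
  rw [Fin.prod_univ_two]
  simp

end Otimes

end S15

set_option maxHeartbeats 1000000 in
/-- Second-level comparison of two almost rough paths with their associated
rough paths: there is `C > 0`, depending only on `p`, `θ` and `ω(0,1)`, such that
`‖(Â²_{s,t} − A²_{s,t}) − (B̂²_{s,t} − B²_{s,t})‖ ≤ ε C ω(s,t)^θ` and consequently
`‖Â²_{s,t} − B̂²_{s,t}‖ ≤ ε C ω(s,t)^{2/p}`. -/
theorem statement15 (p θ : ℝ) (hp : 2 ≤ p) (hθ : 1 < θ) (c₀ : ℝ) :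
    ∃ C : ℝ, 0 < C ∧
      ∀ (V : Type u) [NormedAddCommGroup V] [NormedSpace ℝ V] [CompleteSpace V],
      ∀ (ε : ℝ), 0 ≤ ε →
      ∀ (ω : ℝ → ℝ → ℝ), IsControl ω → ω 0 1 = c₀ →
      ∀ (A1 B1 A1hat B1hat : ℝ → ℝ → V) (A2 B2 A2hat B2hat : ℝ → ℝ → TensorSq V),
        (∀ s t, 0 ≤ s → s ≤ t → t ≤ 1 →
          ‖A1 s t‖ ≤ ω s t ^ (1 / p) ∧ ‖B1 s t‖ ≤ ω s t ^ (1 / p) ∧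
          ‖A1 s t - B1 s t‖ ≤ ε * ω s t ^ (1 / p) ∧
          projSN (A2 s t) ≤ ω s t ^ (2 / p) ∧ projSN (B2 s t) ≤ ω s t ^ (2 / p) ∧
          projSN (A2 s t - B2 s t) ≤ ε * ω s t ^ (2 / p)) →
        (∀ s u t, 0 ≤ s → s ≤ u → u ≤ t → t ≤ 1 →
          ‖A1 s t - A1 s u - A1 u t‖ ≤ ω s t ^ θ ∧
          ‖B1 s t - B1 s u - B1 u t‖ ≤ ω s t ^ θ ∧
          ‖(A1 s t - A1 s u - A1 u t) - (B1 s t - B1 s u - B1 u t)‖ ≤ ε * ω s t ^ θ) →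
        (∀ s u t, 0 ≤ s → s ≤ u → u ≤ t → t ≤ 1 →
          projSN (A2 s t - A2 s u - A2 u t - otimes (A1 s u) (A1 u t)) ≤ ω s t ^ θ ∧
          projSN (B2 s t - B2 s u - B2 u t - otimes (B1 s u) (B1 u t)) ≤ ω s t ^ θ ∧
          projSN ((A2 s t - A2 s u - A2 u t - otimes (A1 s u) (A1 u t))
              - (B2 s t - B2 s u - B2 u t - otimes (B1 s u) (B1 u t))) ≤ ε * ω s t ^ θ) →
        (∀ s t, 0 ≤ s → s ≤ t → t ≤ 1 → PartSumLimit A1 s t (A1hat s t)) →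
        (∀ s t, 0 ≤ s → s ≤ t → t ≤ 1 → PartSumLimit B1 s t (B1hat s t)) →
        (∀ s t, 0 ≤ s → s ≤ t → t ≤ 1 → PartSumLimit2 A2 A1hat s t (A2hat s t)) →
        (∀ s t, 0 ≤ s → s ≤ t → t ≤ 1 → PartSumLimit2 B2 B1hat s t (B2hat s t)) →
        ∀ s t, 0 ≤ s → s ≤ t → t ≤ 1 →
          projSN ((A2hat s t - A2 s t) - (B2hat s t - B2 s t)) ≤ ε * C * ω s t ^ θ ∧
          projSN (A2hat s t - B2hat s t) ≤ ε * C * ω s t ^ (2 / p) := by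
  classical
  have hp0 : 0 < p := by linarith
  have hθ0 : 0 < θ := by linarith
  have hp1 : (0:ℝ) < 1 / p := by positivity
  have h2pθ : 0 < θ - 2 / p := by
    have : 2 / p ≤ 1 := by rw [div_le_one hp0]; linarith
    linarith
  set Kθ : ℝ := S15.Cth θ with hKθdef
  have hKθ0 : 0 ≤ Kθ := S15.cth_nonneg
  set d : ℝ := max c₀ 0 with hddef
  have hd0 : 0 ≤ d := le_max_right _ _
  set M : ℝ := d ^ (1/p) + Kθ * d ^ θ with hMdef
  have hM0 : 0 ≤ M :=
    add_nonneg (Real.rpow_nonneg hd0 _) (mul_nonneg hKθ0 (Real.rpow_nonneg hd0 _))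
  set K2 : ℝ := 1 + 2 * Kθ * d ^ (1/p) + 2 * M * Kθ with hK2def
  have hK20 : 0 ≤ K2 := by
    have h1 := mul_nonneg (mul_nonneg (by norm_num : (0:ℝ) ≤ 2) hKθ0)
      (Real.rpow_nonneg hd0 (1/p))
    have h2 := mul_nonneg (mul_nonneg (by norm_num : (0:ℝ) ≤ 2) hM0) hKθ0
    rw [hK2def]; linarith
  refine ⟨K2 * Kθ * (1 + d ^ (θ - 2/p)) + 1, ?_, ?_⟩
  · have h1 := Real.rpow_nonneg hd0 (θ - 2/p)
    have h2 := mul_nonneg (mul_nonneg hK20 hKθ0) h1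
    have h3 := mul_nonneg hK20 hKθ0
    have h4 : (0:ℝ) ≤ K2 * Kθ * (1 + d ^ (θ - 2/p)) :=
      mul_nonneg h3 (by linarith)
    linarith
  intro V _ _ _ ε hε ω hω hc₀ A1 B1 A1hat B1hat A2 B2 A2hat B2hat hy1 hy2 hy3 hlA hlB hlA2 hlB2
  have hc₀0 : 0 ≤ c₀ := by rw [← hc₀]; exact S15.ctl_nonneg hω le_rfl zero_le_one le_rfl
  have hdc : d = c₀ := max_eq_left hc₀0
  have hωnn : ∀ x y, 0 ≤ x → x ≤ y → y ≤ 1 → 0 ≤ ω x y := fun x y hx hxy hy =>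
    S15.ctl_nonneg hω hx hxy hy
  have hωd : ∀ x y, 0 ≤ x → x ≤ y → y ≤ 1 → ω x y ≤ d := by
    intro x y hx hxy hy
    rw [hdc, ← hc₀]
    exact S15.ctl_mono hω le_rfl hx hxy hy le_rfl
  -- Level 1: associated rough path comparison
  have hA1lim : ∀ x y, 0 ≤ x → x ≤ y → y ≤ 1 →
      ‖A1hat x y - A1 x y‖ ≤ Kθ * ω x y ^ θ := by
    intro x y hx hxy hy
    have hbd := S15.key (normSeminorm ℝ V) hθ hω hx hxy hy A1 1 zero_le_one
      (fun a u b ha hau hub hbt => by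
        rw [one_mul]
        simpa using (hy2 a u b (hx.trans ha) hau hub (hbt.trans hy)).1)
    have := S15.limit_of_bound (normSeminorm ℝ V) hxy
      (fun P : Subdivision x y => ∑ i ∈ Finset.range P.N, A1 (P.pt i) (P.pt (i+1)))
      (A1hat x y) (A1 x y) (1 * Kθ * ω x y ^ θ)
      (fun η hη => by
        obtain ⟨δ, hδ, h⟩ := hlA x y hx hxy hy η hη
        exact ⟨δ, hδ, fun P hP => by simpa using h P hP⟩)
      (fun P => by simpa using hbd P)
    simpa using this
  have hB1lim : ∀ x y, 0 ≤ x → x ≤ y → y ≤ 1 →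
      ‖B1hat x y - B1 x y‖ ≤ Kθ * ω x y ^ θ := by
    intro x y hx hxy hy
    have hbd := S15.key (normSeminorm ℝ V) hθ hω hx hxy hy B1 1 zero_le_one
      (fun a u b ha hau hub hbt => by
        rw [one_mul]
        simpa using (hy2 a u b (hx.trans ha) hau hub (hbt.trans hy)).2.1)
    have := S15.limit_of_bound (normSeminorm ℝ V) hxy
      (fun P : Subdivision x y => ∑ i ∈ Finset.range P.N, B1 (P.pt i) (P.pt (i+1)))
      (B1hat x y) (B1 x y) (1 * Kθ * ω x y ^ θ)
      (fun η hη => by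
        obtain ⟨δ, hδ, h⟩ := hlB x y hx hxy hy η hη
        exact ⟨δ, hδ, fun P hP => by simpa using h P hP⟩)
      (fun P => by simpa using hbd P)
    simpa using this
  have hD1lim : ∀ x y, 0 ≤ x → x ≤ y → y ≤ 1 →
      ‖(A1hat x y - B1hat x y) - (A1 x y - B1 x y)‖ ≤ ε * Kθ * ω x y ^ θ := by
    intro x y hx hxy hy
    have hbd := S15.key (normSeminorm ℝ V) hθ hω hx hxy hy
      (fun a b => A1 a b - B1 a b) ε hε
      (fun a u b ha hau hub hbt => by
        have h := (hy2 a u b (hx.trans ha) hau hub (hbt.trans hy)).2.2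
        have e : (A1 a b - B1 a b) - (A1 a u - B1 a u) - (A1 u b - B1 u b)
            = (A1 a b - A1 a u - A1 u b) - (B1 a b - B1 a u - B1 u b) := by abel
        rw [e]
        simpa using h)
    have := S15.limit_of_bound (normSeminorm ℝ V) hxy
      (fun P : Subdivision x y =>
        ∑ i ∈ Finset.range P.N, (A1 (P.pt i) (P.pt (i+1)) - B1 (P.pt i) (P.pt (i+1))))
      (A1hat x y - B1hat x y) (A1 x y - B1 x y) (ε * Kθ * ω x y ^ θ)
      (fun η hη => by
        obtain ⟨δ1, hδ1, hA⟩ := hlA x y hx hxy hy (η/2) (by linarith)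
        obtain ⟨δ2, hδ2, hB⟩ := hlB x y hx hxy hy (η/2) (by linarith)
        refine ⟨min δ1 δ2, lt_min hδ1 hδ2, fun P hP => ?_⟩
        have e : (∑ i ∈ Finset.range P.N, (A1 (P.pt i) (P.pt (i+1)) - B1 (P.pt i) (P.pt (i+1))))
            - (A1hat x y - B1hat x y)
            = ((∑ i ∈ Finset.range P.N, A1 (P.pt i) (P.pt (i+1))) - A1hat x y)
              - ((∑ i ∈ Finset.range P.N, B1 (P.pt i) (P.pt (i+1))) - B1hat x y) := by
          rw [Finset.sum_sub_distrib]; abel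
        have h1' := hA P (lt_of_lt_of_le hP (min_le_left _ _))
        have h2' := hB P (lt_of_lt_of_le hP (min_le_right _ _))
        rw [show ((normSeminorm ℝ V) : V → ℝ) = norm from rfl] at *
        calc ‖_‖ = ‖_‖ := congrArg norm e
        _ ≤ ‖(∑ i ∈ Finset.range P.N, A1 (P.pt i) (P.pt (i+1))) - A1hat x y‖
            + ‖(∑ i ∈ Finset.range P.N, B1 (P.pt i) (P.pt (i+1))) - B1hat x y‖ :=
          norm_sub_le _ _
        _ ≤ η/2 + η/2 := add_le_add h1' h2'
        _ = η := by ring)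
      (fun P => by simpa using hbd P)
    simpa using this
  -- diagonal values vanish
  have hdiagA : ∀ x, 0 ≤ x → x ≤ 1 → A1hat x x = 0 := by
    intro x hx hx1
    have h := hA1lim x x hx le_rfl hx1
    have hωxx : ω x x = 0 := hω.2.1 x hx hx1
    rw [hωxx, Real.zero_rpow (ne_of_gt hθ0), mul_zero] at h
    have hA1xx : ‖A1 x x‖ ≤ 0 := by
      have h' := (hy1 x x hx le_rfl hx1).1
      rwa [hωxx, Real.zero_rpow (ne_of_gt hp1)] at h'
    have h2 : ‖A1hat x x‖ ≤ 0 := by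
      have := norm_add_le (A1hat x x - A1 x x) (A1 x x)
      simp only [sub_add_cancel] at this
      linarith
    exact norm_le_zero_iff.mp h2
  have hdiagB : ∀ x, 0 ≤ x → x ≤ 1 → B1hat x x = 0 := by
    intro x hx hx1
    have h := hB1lim x x hx le_rfl hx1
    have hωxx : ω x x = 0 := hω.2.1 x hx hx1
    rw [hωxx, Real.zero_rpow (ne_of_gt hθ0), mul_zero] at h
    have hB1xx : ‖B1 x x‖ ≤ 0 := by
      have h' := (hy1 x x hx le_rfl hx1).2.1
      rwa [hωxx, Real.zero_rpow (ne_of_gt hp1)] at h'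
    have h2 : ‖B1hat x x‖ ≤ 0 := by
      have := norm_add_le (B1hat x x - B1 x x) (B1 x x)
      simp only [sub_add_cancel] at this
      linarith
    exact norm_le_zero_iff.mp h2
  -- additivity of the associated level-1 paths
  have haddgen : ∀ (F : ℝ → ℝ → V) (Fhat : ℝ → ℝ → V),
      (∀ x y, 0 ≤ x → x ≤ y → y ≤ 1 → PartSumLimit F x y (Fhat x y)) →
      ∀ x y z, 0 ≤ x → x ≤ y → y ≤ z → z ≤ 1 →
      Fhat x z = Fhat x y + Fhat y z := by
    intro F Fhat hl x y z hx hxy hyz hz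
    have hxz : x ≤ z := hxy.trans hyz
    have hkey : ∀ η > (0:ℝ), ‖Fhat x y + Fhat y z - Fhat x z‖ ≤ 0 + η := by
      intro η hη
      obtain ⟨δ1, hδ1, hL1⟩ := hl x y hx hxy (hyz.trans hz) (η/3) (by linarith)
      obtain ⟨δ2, hδ2, hL2⟩ := hl y z (hx.trans hxy) hyz hz (η/3) (by linarith)
      obtain ⟨δ3, hδ3, hL3⟩ := hl x z hx hxz hz (η/3) (by linarith)
      set δ := min δ1 (min δ2 δ3) with hδdef
      have hδ0 : 0 < δ := lt_min hδ1 (lt_min hδ2 hδ3)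
      obtain ⟨P1, hP1⟩ := S15.exists_fine x y hxy δ hδ0
      obtain ⟨P2, hP2⟩ := S15.exists_fine y z hyz δ hδ0
      set P := S15.concat P1 P2 with hPdef
      have hPm : P.mesh < δ3 := by
        refine lt_of_le_of_lt (S15.concat_mesh_le P1 P2) ?_
        apply max_lt
        · exact lt_of_lt_of_le hP1 (le_trans (min_le_right _ _) (min_le_right _ _))
        · exact lt_of_lt_of_le hP2 (le_trans (min_le_right _ _) (min_le_right _ _))
      have hS := S15.concat_sum F P1 P2
      have h1' := hL1 P1 (lt_of_lt_of_le hP1 (min_le_left _ _))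
      have h2' := hL2 P2 (lt_of_lt_of_le hP2 (le_trans (min_le_right _ _) (min_le_left _ _)))
      have h3' := hL3 P hPm
      rw [hS] at h3'
      have e : Fhat x y + Fhat y z - Fhat x z
          = -((∑ j ∈ Finset.range P1.N, F (P1.pt j) (P1.pt (j+1))) - Fhat x y)
            - ((∑ j ∈ Finset.range P2.N, F (P2.pt j) (P2.pt (j+1))) - Fhat y z)
            + ((∑ j ∈ Finset.range P1.N, F (P1.pt j) (P1.pt (j+1)))
                + (∑ j ∈ Finset.range P2.N, F (P2.pt j) (P2.pt (j+1))) - Fhat x z) := by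
        abel
      rw [zero_add, e]
      calc ‖_ - _ + _‖ ≤ ‖_ - _‖ + ‖_‖ := norm_add_le _ _
      _ ≤ (‖-((∑ j ∈ Finset.range P1.N, F (P1.pt j) (P1.pt (j+1))) - Fhat x y)‖
            + ‖(∑ j ∈ Finset.range P2.N, F (P2.pt j) (P2.pt (j+1))) - Fhat y z‖) + ‖_‖ :=
        add_le_add_left (norm_sub_le _ _) _
      _ ≤ (η/3 + η/3) + η/3 := by
        refine add_le_add (add_le_add ?_ h2') h3'
        rw [norm_neg]; exact h1'
      _ = η := by ring
    have h0 : ‖Fhat x y + Fhat y z - Fhat x z‖ ≤ 0 :=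
      le_of_forall_pos_le_add hkey
    have := norm_le_zero_iff.mp h0
    have := sub_eq_zero.mp this
    exact this.symm
  have haddA := haddgen A1 A1hat hlA
  have haddB := haddgen B1 B1hat hlB
  -- uniform bounds
  have hrp : ∀ x y (e : ℝ), 0 ≤ e → 0 ≤ x → x ≤ y → y ≤ 1 → ω x y ^ e ≤ d ^ e :=
    fun x y e he hx hxy hy =>
      Real.rpow_le_rpow (hωnn x y hx hxy hy) (hωd x y hx hxy hy) he
  have hA1bd : ∀ x y, 0 ≤ x → x ≤ y → y ≤ 1 → ‖A1 x y‖ ≤ d ^ (1/p) := fun x y hx hxy hy =>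
    le_trans (hy1 x y hx hxy hy).1 (hrp x y (1/p) (le_of_lt hp1) hx hxy hy)
  have hB1bd : ∀ x y, 0 ≤ x → x ≤ y → y ≤ 1 → ‖B1 x y‖ ≤ d ^ (1/p) := fun x y hx hxy hy =>
    le_trans (hy1 x y hx hxy hy).2.1 (hrp x y (1/p) (le_of_lt hp1) hx hxy hy)
  have hABdiff : ∀ x y, 0 ≤ x → x ≤ y → y ≤ 1 → ‖A1 x y - B1 x y‖ ≤ ε * d ^ (1/p) :=
    fun x y hx hxy hy =>
      le_trans (hy1 x y hx hxy hy).2.2.1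
        (mul_le_mul_of_nonneg_left (hrp x y (1/p) (le_of_lt hp1) hx hxy hy) hε)
  have hXAbd : ∀ x y, 0 ≤ x → x ≤ y → y ≤ 1 → ‖A1hat x y‖ ≤ M := by
    intro x y hx hxy hy
    have h1' := hA1lim x y hx hxy hy
    have h2' := hA1bd x y hx hxy hy
    have h3' : Kθ * ω x y ^ θ ≤ Kθ * d ^ θ :=
      mul_le_mul_of_nonneg_left (hrp x y θ (le_of_lt hθ0) hx hxy hy) hKθ0
    have := norm_add_le (A1hat x y - A1 x y) (A1 x y)
    simp only [sub_add_cancel] at this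
    rw [hMdef]; linarith
  have hXBbd : ∀ x y, 0 ≤ x → x ≤ y → y ≤ 1 → ‖B1hat x y‖ ≤ M := by
    intro x y hx hxy hy
    have h1' := hB1lim x y hx hxy hy
    have h2' := hB1bd x y hx hxy hy
    have h3' : Kθ * ω x y ^ θ ≤ Kθ * d ^ θ :=
      mul_le_mul_of_nonneg_left (hrp x y θ (le_of_lt hθ0) hx hxy hy) hKθ0
    have := norm_add_le (B1hat x y - B1 x y) (B1 x y)
    simp only [sub_add_cancel] at this
    rw [hMdef]; linarith
  have hXdiff : ∀ x y, 0 ≤ x → x ≤ y → y ≤ 1 → ‖A1hat x y - B1hat x y‖ ≤ ε * M := by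
    intro x y hx hxy hy
    have h1' := hD1lim x y hx hxy hy
    have h2' := hABdiff x y hx hxy hy
    have h3' : ε * Kθ * ω x y ^ θ ≤ ε * Kθ * d ^ θ :=
      mul_le_mul_of_nonneg_left (hrp x y θ (le_of_lt hθ0) hx hxy hy) (mul_nonneg hε hKθ0)
    have := norm_add_le ((A1hat x y - B1hat x y) - (A1 x y - B1 x y)) (A1 x y - B1 x y)
    simp only [sub_add_cancel] at this
    rw [hMdef]; nlinarith
  -- now the second level
  intro s t hs hst ht
  have ht1 : t ≤ 1 := ht
  have hω0 : 0 ≤ ω s t := hωnn s t hs hst ht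
  set ν : Seminorm ℝ (TensorSq V) := PiTensorProduct.projectiveSeminorm with hνdef
  have hproj : ∀ z : TensorSq V, projSN z = ν z := fun z => rfl
  have hdef : ∀ a u b, s ≤ a → a ≤ u → u ≤ b → b ≤ t →
      ν (((A2 a b + otimes (A1hat s a) (A1hat a b))
            - (B2 a b + otimes (B1hat s a) (B1hat a b)))
         - ((A2 a u + otimes (A1hat s a) (A1hat a u))
            - (B2 a u + otimes (B1hat s a) (B1hat a u)))
         - ((A2 u b + otimes (A1hat s u) (A1hat u b))
            - (B2 u b + otimes (B1hat s u) (B1hat u b))))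
        ≤ (ε * K2) * ω a b ^ θ := by
    intro a u b ha hau hub hbt
    have h0a : 0 ≤ a := hs.trans ha
    have h0u : 0 ≤ u := h0a.trans hau
    have hb1 : b ≤ 1 := hbt.trans ht1
    have hu1 : u ≤ 1 := hub.trans hb1
    have hXab : A1hat a b = A1hat a u + A1hat u b := haddA a u b h0a hau hub hb1
    have hXsu : A1hat s u = A1hat s a + A1hat a u := haddA s a u hs ha hau hu1
    have hYab : B1hat a b = B1hat a u + B1hat u b := haddB a u b h0a hau hub hb1
    have hYsu : B1hat s u = B1hat s a + B1hat a u := haddB s a u hs ha hau hu1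
    have idD : (((A2 a b + otimes (A1hat s a) (A1hat a b))
            - (B2 a b + otimes (B1hat s a) (B1hat a b)))
         - ((A2 a u + otimes (A1hat s a) (A1hat a u))
            - (B2 a u + otimes (B1hat s a) (B1hat a u)))
         - ((A2 u b + otimes (A1hat s u) (A1hat u b))
            - (B2 u b + otimes (B1hat s u) (B1hat u b))))
        = ((A2 a b - A2 a u - A2 u b - otimes (A1 a u) (A1 u b))
            - (B2 a b - B2 a u - B2 u b - otimes (B1 a u) (B1 u b)))
          + (otimes ((A1 a u - A1hat a u) - (B1 a u - B1hat a u)) (A1 u b)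
            + otimes (B1 a u - B1hat a u) (A1 u b - B1 u b)
            + otimes (A1hat a u - B1hat a u) (A1 u b - A1hat u b)
            + otimes (B1hat a u) ((A1 u b - A1hat u b) - (B1 u b - B1hat u b))) := by
      rw [hXab, hXsu, hYab, hYsu]
      simp only [S15.otimes_add_left, S15.otimes_add_right, S15.otimes_sub_left,
        S15.otimes_sub_right]
      abel
    rw [idD]
    set wab := ω a b ^ θ with hwabdef
    have hwab0 : 0 ≤ wab := Real.rpow_nonneg (hωnn a b h0a (hau.trans hub) hb1) θ
    have hwau : ω a u ^ θ ≤ wab := by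
      rw [hwabdef]
      exact Real.rpow_le_rpow (hωnn a u h0a hau hu1)
        (S15.ctl_mono hω h0a le_rfl hau hub hb1) (le_of_lt hθ0)
    have hwub : ω u b ^ θ ≤ wab := by
      rw [hwabdef]
      exact Real.rpow_le_rpow (hωnn u b h0u hub hb1)
        (S15.ctl_mono hω h0a hau hub le_rfl hb1) (le_of_lt hθ0)
    have hd1p0 : (0:ℝ) ≤ d ^ (1/p) := Real.rpow_nonneg hd0 _
    -- term bounds
    have hb1' : ν (otimes ((A1 a u - A1hat a u) - (B1 a u - B1hat a u)) (A1 u b))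
        ≤ (ε * Kθ * wab) * d ^ (1/p) := by
      refine le_trans (S15.projSN_otimes_le _ _) ?_
      have e : (A1 a u - A1hat a u) - (B1 a u - B1hat a u)
          = -((A1hat a u - B1hat a u) - (A1 a u - B1 a u)) := by abel
      have hx : ‖(A1 a u - A1hat a u) - (B1 a u - B1hat a u)‖ ≤ ε * Kθ * wab := by
        rw [e, norm_neg]
        exact le_trans (hD1lim a u h0a hau hu1)
          (mul_le_mul_of_nonneg_left hwau (mul_nonneg hε hKθ0))
      exact mul_le_mul hx (hA1bd u b h0u hub hb1) (norm_nonneg _)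
        (mul_nonneg (mul_nonneg hε hKθ0) hwab0)
    have hb2' : ν (otimes (B1 a u - B1hat a u) (A1 u b - B1 u b))
        ≤ (Kθ * wab) * (ε * d ^ (1/p)) := by
      refine le_trans (S15.projSN_otimes_le _ _) ?_
      have hx : ‖B1 a u - B1hat a u‖ ≤ Kθ * wab := by
        rw [norm_sub_rev]
        exact le_trans (hB1lim a u h0a hau hu1) (mul_le_mul_of_nonneg_left hwau hKθ0)
      exact mul_le_mul hx (hABdiff u b h0u hub hb1) (norm_nonneg _)
        (mul_nonneg hKθ0 hwab0)
    have hb3' : ν (otimes (A1hat a u - B1hat a u) (A1 u b - A1hat u b))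
        ≤ (ε * M) * (Kθ * wab) := by
      refine le_trans (S15.projSN_otimes_le _ _) ?_
      have hx : ‖A1 u b - A1hat u b‖ ≤ Kθ * wab := by
        rw [norm_sub_rev]
        exact le_trans (hA1lim u b h0u hub hb1) (mul_le_mul_of_nonneg_left hwub hKθ0)
      exact mul_le_mul (hXdiff a u h0a hau hu1) hx (norm_nonneg _)
        (mul_nonneg hε hM0)
    have hb4' : ν (otimes (B1hat a u) ((A1 u b - A1hat u b) - (B1 u b - B1hat u b)))
        ≤ M * (ε * Kθ * wab) := by
      refine le_trans (S15.projSN_otimes_le _ _) ?_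
      have e : (A1 u b - A1hat u b) - (B1 u b - B1hat u b)
          = -((A1hat u b - B1hat u b) - (A1 u b - B1 u b)) := by abel
      have hx : ‖(A1 u b - A1hat u b) - (B1 u b - B1hat u b)‖ ≤ ε * Kθ * wab := by
        rw [e, norm_neg]
        exact le_trans (hD1lim u b h0u hub hb1)
          (mul_le_mul_of_nonneg_left hwub (mul_nonneg hε hKθ0))
      exact mul_le_mul (hXBbd a u h0a hau hu1) hx (norm_nonneg _) hM0
    have hb0' : ν ((A2 a b - A2 a u - A2 u b - otimes (A1 a u) (A1 u b))
            - (B2 a b - B2 a u - B2 u b - otimes (B1 a u) (B1 u b))) ≤ ε * wab := by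
      have := (hy3 a u b h0a hau hub hb1).2.2
      rw [hproj] at this
      exact this
    calc ν (_ + (_ + _ + _ + _))
        ≤ ν _ + ν (_ + _ + _ + _) := map_add_le_add ν _ _
    _ ≤ ν _ + (ν (_ + _ + _) + ν _) := add_le_add_right (map_add_le_add ν _ _) _
    _ ≤ ν _ + ((ν (_ + _) + ν _) + ν _) :=
        add_le_add_right (add_le_add_left (map_add_le_add ν _ _) _) _
    _ ≤ ν _ + (((ν _ + ν _) + ν _) + ν _) :=
        add_le_add_right (add_le_add_left (add_le_add_left (map_add_le_add ν _ _) _) _) _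
    _ ≤ ε * wab + (((ε * Kθ * wab) * d ^ (1/p) + (Kθ * wab) * (ε * d ^ (1/p))
          + (ε * M) * (Kθ * wab)) + M * (ε * Kθ * wab)) :=
        add_le_add hb0' (add_le_add (add_le_add (add_le_add hb1' hb2') hb3') hb4')
    _ = (ε * K2) * wab := by rw [hK2def]; ring
  have hkey2 := S15.key ν hθ hω hs hst ht1
    (fun a b => (A2 a b + otimes (A1hat s a) (A1hat a b))
      - (B2 a b + otimes (B1hat s a) (B1hat a b)))
    (ε * K2) (mul_nonneg hε hK20)
    (fun a u b ha hau hub hbt => by exact hdef a u b ha hau hub hbt)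
  have hlim2 : ∀ η > (0:ℝ), ∃ δ > (0:ℝ), ∀ P : Subdivision s t, P.mesh < δ →
      ν ((∑ i ∈ Finset.range P.N,
          ((A2 (P.pt i) (P.pt (i+1)) + otimes (A1hat s (P.pt i)) (A1hat (P.pt i) (P.pt (i+1))))
            - (B2 (P.pt i) (P.pt (i+1))
              + otimes (B1hat s (P.pt i)) (B1hat (P.pt i) (P.pt (i+1))))))
        - (A2hat s t - B2hat s t)) ≤ η := by
    intro η hη
    obtain ⟨δ1, hδ1, hA⟩ := hlA2 s t hs hst ht1 (η/2) (by linarith)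
    obtain ⟨δ2, hδ2, hB⟩ := hlB2 s t hs hst ht1 (η/2) (by linarith)
    refine ⟨min δ1 δ2, lt_min hδ1 hδ2, fun P hP => ?_⟩
    have h1' := hA P (lt_of_lt_of_le hP (min_le_left _ _))
    have h2' := hB P (lt_of_lt_of_le hP (min_le_right _ _))
    rw [hproj] at h1' h2'
    have e : (∑ i ∈ Finset.range P.N,
          ((A2 (P.pt i) (P.pt (i+1)) + otimes (A1hat s (P.pt i)) (A1hat (P.pt i) (P.pt (i+1))))
            - (B2 (P.pt i) (P.pt (i+1))
              + otimes (B1hat s (P.pt i)) (B1hat (P.pt i) (P.pt (i+1))))))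
        - (A2hat s t - B2hat s t)
        = ((∑ i ∈ Finset.range P.N,
            (A2 (P.pt i) (P.pt (i+1)) + otimes (A1hat s (P.pt i)) (A1hat (P.pt i) (P.pt (i+1)))))
          - A2hat s t)
          - ((∑ i ∈ Finset.range P.N,
            (B2 (P.pt i) (P.pt (i+1)) + otimes (B1hat s (P.pt i)) (B1hat (P.pt i) (P.pt (i+1)))))
          - B2hat s t) := by
      rw [Finset.sum_sub_distrib]; abel
    rw [e]
    refine le_trans (S15.seminorm_sub_le ν _ _) ?_
    have : η/2 + η/2 = η := by ring
    rw [← this]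
    exact add_le_add h1' h2'
  have hfin := S15.limit_of_bound ν hst
    (fun P : Subdivision s t => ∑ i ∈ Finset.range P.N,
        ((A2 (P.pt i) (P.pt (i+1)) + otimes (A1hat s (P.pt i)) (A1hat (P.pt i) (P.pt (i+1))))
          - (B2 (P.pt i) (P.pt (i+1))
            + otimes (B1hat s (P.pt i)) (B1hat (P.pt i) (P.pt (i+1))))))
    (A2hat s t - B2hat s t)
    ((A2 s t + otimes (A1hat s s) (A1hat s t)) - (B2 s t + otimes (B1hat s s) (B1hat s t)))
    ((ε * K2) * Kθ * ω s t ^ θ) hlim2 (fun P => hkey2 P)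
  have hT0 : (A2 s t + otimes (A1hat s s) (A1hat s t))
      - (B2 s t + otimes (B1hat s s) (B1hat s t)) = A2 s t - B2 s t := by
    rw [hdiagA s hs (hst.trans ht1), hdiagB s hs (hst.trans ht1),
      S15.otimes_zero_left, S15.otimes_zero_left, add_zero, add_zero]
  rw [hT0] at hfin
  -- hfin : ν ((A2hat s t - B2hat s t) - (A2 s t - B2 s t)) ≤ ε * K2 * Kθ * ω s t ^ θ
  have hwθ0 : 0 ≤ ω s t ^ θ := Real.rpow_nonneg hω0 θ
  have hw2p0 : 0 ≤ ω s t ^ (2/p) := Real.rpow_nonneg hω0 (2/p)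
  have hCge : K2 * Kθ ≤ K2 * Kθ * (1 + d ^ (θ - 2/p)) + 1 := by
    nlinarith [mul_nonneg (mul_nonneg hK20 hKθ0) (Real.rpow_nonneg hd0 (θ - 2/p))]
  constructor
  · have e : (A2hat s t - A2 s t) - (B2hat s t - B2 s t)
        = (A2hat s t - B2hat s t) - (A2 s t - B2 s t) := by abel
    rw [hproj, e]
    refine le_trans hfin ?_
    have h1' : (ε * K2) * Kθ * ω s t ^ θ = ε * (K2 * Kθ) * ω s t ^ θ := by ring
    rw [h1']
    exact mul_le_mul_of_nonneg_right (mul_le_mul_of_nonneg_left hCge hε) hwθ0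
  · have hsplitθ : ω s t ^ θ = ω s t ^ (2/p) * ω s t ^ (θ - 2/p) := by
      rcases eq_or_lt_of_le hω0 with h0 | h0
      · rw [← h0, Real.zero_rpow (ne_of_gt hθ0),
          Real.zero_rpow (by positivity : (2:ℝ)/p ≠ 0), zero_mul]
      · have h' := Real.rpow_add h0 (2/p) (θ - 2/p)
        rw [show 2/p + (θ - 2/p) = θ from by ring] at h'
        exact h'
    have hωsd : ω s t ^ (θ - 2/p) ≤ d ^ (θ - 2/p) :=
      hrp s t (θ - 2/p) (le_of_lt h2pθ) hs hst ht1
    have htri : ν (A2hat s t - B2hat s t)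
        ≤ ν ((A2hat s t - B2hat s t) - (A2 s t - B2 s t)) + ν (A2 s t - B2 s t) := by
      have := map_add_le_add ν ((A2hat s t - B2hat s t) - (A2 s t - B2 s t))
        (A2 s t - B2 s t)
      simpa using this
    have hAB2 : ν (A2 s t - B2 s t) ≤ ε * ω s t ^ (2/p) := by
      have := (hy1 s t hs hst ht1).2.2.2.2.2
      rwa [hproj] at this
    rw [hproj]
    have hstep : (ε * K2) * Kθ * ω s t ^ θ
        ≤ ε * (K2 * Kθ * d ^ (θ - 2/p)) * ω s t ^ (2/p) := by
      rw [hsplitθ]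
      have h1' : (ε * K2) * Kθ * (ω s t ^ (2/p) * ω s t ^ (θ - 2/p))
          = (ε * (K2 * Kθ)) * ω s t ^ (θ - 2/p) * ω s t ^ (2/p) := by ring
      have h2' : ε * (K2 * Kθ * d ^ (θ - 2/p)) * ω s t ^ (2/p)
          = (ε * (K2 * Kθ)) * d ^ (θ - 2/p) * ω s t ^ (2/p) := by ring
      rw [h1', h2']
      exact mul_le_mul_of_nonneg_right
        (mul_le_mul_of_nonneg_left hωsd (mul_nonneg hε (mul_nonneg hK20 hKθ0))) hw2p0
    refine le_trans htri (le_trans (add_le_add (le_trans hfin hstep) hAB2) ?_)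
    have hfinal : ε * (K2 * Kθ * d ^ (θ - 2/p)) * ω s t ^ (2/p) + ε * ω s t ^ (2/p)
        ≤ ε * (K2 * Kθ * (1 + d ^ (θ - 2/p)) + 1) * ω s t ^ (2/p) := by
      have h0 : 0 ≤ ε * (K2 * Kθ) * ω s t ^ (2/p) :=
        mul_nonneg (mul_nonneg hε (mul_nonneg hK20 hKθ0)) hw2p0
      nlinarith
    exact hfinal
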